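/- For every positive integer n, the relation ≤ on F_ord(n) (the reflexive–transitive closure of the relations F ≥ F[v] over non-leaf vertices v) is a partial order, and its covering relation is exactly ⋖, where F' ⋖ F means that F' = F[v] for some non-leaf vertex v of F. -/

import Mathlib

open scoped Classical

noncomputable section

/-- An ordered forest on `n` vertices, with vertices identified with their labels `1, …, n`
under left-to-right preorder traversal, encoded by its parent function: `par i` is the
parent of vertex `i` (and `par i = 0` when `i` is a root).  The condition `nested` says
exactly that the function arises from the preorder traversal labeling of an ordered forest:
the vertices strictly between `par i` and `i` all lie in the subtree interval below `par i`.
Values outside `[1, n]` are normalized to `0`, so that two ordered forests are equal iff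
their parent functions are equal. -/
structure OForest (n : ℕ) where
  par : ℕ → ℕ
  par_lt : ∀ i, 1 ≤ i → i ≤ n → par i < i
  nested : ∀ i k, 1 ≤ i → i ≤ n → par i < k → k < i → par i ≤ par k
  par_out : ∀ i, i = 0 ∨ n < i → par i = 0

/-- Auxiliary construction for the operation on a non-leaf vertex `v`:
the rightmost child `v'` of `v` is reattached to the parent of `v`. -/
def OForest.mkOp {n : ℕ} (F : OForest n) (v : ℕ) (hv : 1 ≤ v)
    (hne : ((Finset.Icc 1 n).filter fun i => F.par i = v).Nonempty) : OForest n where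
  par i := if i = ((Finset.Icc 1 n).filter fun i => F.par i = v).max' hne then F.par v
           else F.par i
  par_lt := by
    set v' := ((Finset.Icc 1 n).filter fun i => F.par i = v).max' hne with hv'def
    have hmem := Finset.max'_mem _ hne
    rw [← hv'def] at hmem
    simp only [Finset.mem_filter, Finset.mem_Icc] at hmem
    obtain ⟨⟨hv'1, hv'n⟩, hpar⟩ := hmem
    have hvlt : v < v' := hpar ▸ F.par_lt v' hv'1 hv'n
    have hvn : v ≤ n := le_trans hvlt.le hv'n
    have hpv : F.par v < v := F.par_lt v hv hvn
    intro i h1 h2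
    try dsimp only
    by_cases hi : i = v'
    · subst hi; rw [if_pos rfl]; omega
    · rw [if_neg hi]; exact F.par_lt i h1 h2
  nested := by
    set v' := ((Finset.Icc 1 n).filter fun i => F.par i = v).max' hne with hv'def
    have hmem := Finset.max'_mem _ hne
    rw [← hv'def] at hmem
    simp only [Finset.mem_filter, Finset.mem_Icc] at hmem
    obtain ⟨⟨hv'1, hv'n⟩, hpar⟩ := hmem
    have hvlt : v < v' := hpar ▸ F.par_lt v' hv'1 hv'n
    have hvn : v ≤ n := le_trans hvlt.le hv'n
    have hpv : F.par v < v := F.par_lt v hv hvn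
    intro i k h1 h2 h3 h4
    try dsimp only at h3 ⊢
    by_cases hi : i = v'
    · subst hi
      rw [if_pos rfl] at h3 ⊢
      rw [if_neg (by omega : ¬ k = v')]
      by_cases hkv : k = v
      · subst hkv; exact le_refl _
      · by_cases hk2 : k < v
        · exact F.nested v k hv hvn h3 hk2
        · have hvk : v < k := by omega
          have hnk := F.nested v' k hv'1 hv'n (by rw [hpar]; exact hvk) h4
          rw [hpar] at hnk
          omega
    · rw [if_neg hi] at h3 ⊢
      by_cases hk : k = v'
      · subst hk
        rw [if_pos rfl]
        have h5 : F.par i ≤ v := by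
          have hni := F.nested i v' h1 h2 h3 h4
          rw [hpar] at hni; exact hni
        rcases lt_or_eq_of_le h5 with h6 | h6
        · exact F.nested i v h1 h2 h6 (by omega)
        · exfalso
          have hiC : i ∈ (Finset.Icc 1 n).filter fun j => F.par j = v :=
            Finset.mem_filter.2 ⟨Finset.mem_Icc.2 ⟨h1, h2⟩, h6⟩
          have := Finset.le_max' _ i hiC
          omega
      · rw [if_neg hk]; exact F.nested i k h1 h2 h3 h4
  par_out := by
    set v' := ((Finset.Icc 1 n).filter fun i => F.par i = v).max' hne with hv'def
    have hmem := Finset.max'_mem _ hne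
    rw [← hv'def] at hmem
    simp only [Finset.mem_filter, Finset.mem_Icc] at hmem
    obtain ⟨⟨hv'1, hv'n⟩, hpar⟩ := hmem
    intro i hi
    try dsimp only
    by_cases h' : i = v'
    · subst h'; exact absurd hi (by omega)
    · rw [if_neg h']; exact F.par_out i hi

/-- The operation on vertex `v` of `F`. -/
def OForest.op {n : ℕ} (F : OForest n) (v : ℕ) : OForest n :=
  if h : 1 ≤ v ∧ ((Finset.Icc 1 n).filter fun i => F.par i = v).Nonempty then
    F.mkOp v h.1 h.2
  else F

/-- Vertex `v` is a non-leaf vertex of `F`: it is a vertex in `[1, n]` having a child. -/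
def OForest.NonLeaf {n : ℕ} (F : OForest n) (v : ℕ) : Prop :=
  1 ≤ v ∧ v ≤ n ∧ ∃ i, 1 ≤ i ∧ i ≤ n ∧ F.par i = v

/-- The covering relation on ordered forests: `F` covers `G` iff `G = F.op v` for a
non-leaf vertex `v` of `F`. -/
def OForest.CovRel {n : ℕ} (F G : OForest n) : Prop :=
  ∃ v, F.NonLeaf v ∧ G = F.op v

/-- The partial order on ordered forests on `n` vertices: the reflexive-transitive closure
of the relations `F ≥ F.op v` over non-leaf vertices `v`. -/
def OForest.le {n : ℕ} (G F : OForest n) : Prop :=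
  Relation.ReflTransGen (fun A B : OForest n => A.CovRel B) F G

/-- The path tree: the maximal element of the Tamari lattice, in which vertex `t + 1` is the
unique child of vertex `t` for each `t < n`. -/
def pathForest (n : ℕ) : OForest n where
  par i := if 1 ≤ i ∧ i ≤ n then i - 1 else 0
  par_lt := by intro i h1 h2; simp only [if_pos (And.intro h1 h2)]; omega
  nested := by
    intro i k h1 h2 h3 h4
    try dsimp only at h3 ⊢
    rw [if_pos (And.intro h1 h2)] at h3 ⊢
    split <;> omega
  par_out := by intro i h; (try dsimp only); split <;> omega


/-- Subtree-size vector: `S F v` counts the descendants-or-self of `v` in `F`. -/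
def OForest.S {n : ℕ} (F : OForest n) (v : ℕ) : ℕ :=
  ((Finset.Icc 1 n).filter fun j => v ≤ j ∧ ∀ k, v < k → k ≤ j → v ≤ F.par k).card

lemma OForest.key {n : ℕ} (F : OForest n) {v : ℕ} (hv : F.NonLeaf v) :
    (F.op v).S v < F.S v ∧ ∀ w, w ≠ v → (F.op v).S w = F.S w := by
  obtain ⟨hv1, hvn, i, hi1, hin, hpi⟩ := hv
  have hne : ((Finset.Icc 1 n).filter fun i => F.par i = v).Nonempty :=
    ⟨i, Finset.mem_filter.2 ⟨Finset.mem_Icc.2 ⟨hi1, hin⟩, hpi⟩⟩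
  have hop : F.op v = F.mkOp v hv1 hne := dif_pos ⟨hv1, hne⟩
  set v' := ((Finset.Icc 1 n).filter fun i => F.par i = v).max' hne with hv'def
  have hmem := Finset.max'_mem _ hne
  rw [← hv'def] at hmem
  simp only [Finset.mem_filter, Finset.mem_Icc] at hmem
  obtain ⟨⟨hv'1, hv'n⟩, hpar⟩ := hmem
  have hvlt : v < v' := hpar ▸ F.par_lt v' hv'1 hv'n
  have hpv : F.par v < v := F.par_lt v hv1 hvn
  have hG : ∀ k, (F.op v).par k = if k = v' then F.par v else F.par k := by
    intro k; rw [hop]; rfl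
  constructor
  · apply Finset.card_lt_card
    have hsub : ((Finset.Icc 1 n).filter fun j => v ≤ j ∧ ∀ k, v < k → k ≤ j →
        v ≤ (F.op v).par k) ⊆
        ((Finset.Icc 1 n).filter fun j => v ≤ j ∧ ∀ k, v < k → k ≤ j → v ≤ F.par k) := by
      intro j hj
      simp only [Finset.mem_filter] at hj ⊢
      obtain ⟨hjI, hvj, h⟩ := hj
      refine ⟨hjI, hvj, fun k hk1 hk2 => ?_⟩
      by_cases hk : k = v'
      · subst hk; rw [hpar]
      · have := h k hk1 hk2; rw [hG k, if_neg hk] at this; exact this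
    rw [Finset.ssubset_iff_of_subset hsub]
    refine ⟨v', ?_, ?_⟩
    · simp only [Finset.mem_filter, Finset.mem_Icc]
      refine ⟨⟨hv'1, hv'n⟩, hvlt.le, fun k hk1 hk2 => ?_⟩
      by_cases hk : k = v'
      · subst hk; rw [hpar]
      · have hklt : k < v' := lt_of_le_of_ne hk2 hk
        have := F.nested v' k hv'1 hv'n (by rw [hpar]; exact hk1) hklt
        rw [hpar] at this; exact this
    · intro hmem'
      simp only [Finset.mem_filter, Finset.mem_Icc] at hmem'
      have := hmem'.2.2 v' hvlt le_rfl
      rw [hG v', if_pos rfl] at this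
      omega
  · intro w hw
    unfold OForest.S
    congr 1
    apply Finset.filter_congr
    intro j hj
    simp only [Finset.mem_Icc] at hj
    constructor
    · rintro ⟨hwj, h⟩
      refine ⟨hwj, fun k hk1 hk2 => ?_⟩
      by_cases hk : k = v'
      · subst hk
        have h1 := h v' hk1 hk2
        rw [hG v', if_pos rfl] at h1
        rw [hpar]; omega
      · have := h k hk1 hk2; rw [hG k, if_neg hk] at this; exact this
    · rintro ⟨hwj, h⟩
      refine ⟨hwj, fun k hk1 hk2 => ?_⟩
      rw [hG k]
      by_cases hk : k = v'
      · subst hk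
        rw [if_pos rfl]
        have h1 := h v' hk1 hk2
        rw [hpar] at h1
        have hwv : w < v := lt_of_le_of_ne h1 hw
        exact h v hwv (le_trans hvlt.le hk2)
      · rw [if_neg hk]; exact h k hk1 hk2

lemma OForest.cov_S {n : ℕ} {A B : OForest n} (h : A.CovRel B) :
    ∀ w, B.S w ≤ A.S w := by
  obtain ⟨v, hv, rfl⟩ := h
  intro w
  by_cases hw : w = v
  · subst hw; exact (A.key hv).1.le
  · exact ((A.key hv).2 w hw).le

lemma OForest.le_S {n : ℕ} {F G : OForest n} (h : G.le F) : ∀ w, G.S w ≤ F.S w := by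
  unfold OForest.le at h
  induction h with
  | refl => exact fun w => le_rfl
  | tail _ hbc ih => exact fun w => le_trans (OForest.cov_S hbc w) (ih w)

lemma OForest.antisymm {n : ℕ} (F G : OForest n) (h1 : F.le G) (h2 : G.le F) : F = G := by
  rcases Relation.ReflTransGen.cases_head h1 with h | ⟨c, hGc, hcF⟩
  · exact h.symm
  · exfalso
    obtain ⟨v, hv, rfl⟩ := hGc
    have h3 := OForest.le_S (show F.le (G.op v) from hcF) v
    have h4 := OForest.le_S h2 v
    have h5 := (G.key hv).1
    omega

/-- The relation `≤` on ordered forests on `n` vertices is a partial order (it is reflexive,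
transitive and antisymmetric), and its covering relation is exactly `⋖`, where `F' ⋖ F`
means `F' = F.op v` for some non-leaf vertex `v` of `F`. -/
theorem thm14 (n : ℕ) :
    (∀ F : OForest n, F.le F) ∧
    (∀ F G H : OForest n, F.le G → G.le H → F.le H) ∧
    (∀ F G : OForest n, F.le G → G.le F → F = G) ∧
    (∀ F' F : OForest n,
      (F'.le F ∧ F' ≠ F ∧ ∀ z : OForest n, F'.le z → z.le F → z = F' ∨ z = F) ↔
        F.CovRel F') := by
  refine ⟨fun F => Relation.ReflTransGen.refl,
    fun F G H h1 h2 => h2.trans h1,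
    fun F G h1 h2 => OForest.antisymm F G h1 h2, ?_⟩
  intro F' F
  constructor
  · rintro ⟨h1, h2, h3⟩
    rcases Relation.ReflTransGen.cases_head h1 with h | ⟨c, hFc, hcF'⟩
    · exact absurd h.symm h2
    · obtain ⟨v, hv, rfl⟩ := hFc
      have h4 := h3 (F.op v) hcF' (Relation.ReflTransGen.single ⟨v, hv, rfl⟩)
      rcases h4 with h | h
      · exact ⟨v, hv, h.symm⟩
      · exfalso
        have h5 := (F.key hv).1
        rw [h] at h5
        omega
  · rintro ⟨v, hv, rfl⟩
    refine ⟨Relation.ReflTransGen.single ⟨v, hv, rfl⟩, ?_, ?_⟩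
    · intro heq
      have h5 := (F.key hv).1
      rw [heq] at h5
      omega
    · intro z hz1 hz2
      rcases Relation.ReflTransGen.cases_head hz2 with h | ⟨c, hFc, hcz⟩
      · exact Or.inr h.symm
      · left
        obtain ⟨u, hu, rfl⟩ := hFc
        by_cases huv : u = v
        · subst huv
          exact OForest.antisymm z (F.op u) hcz hz1
        · exfalso
          have h5 := OForest.le_S hcz u
          have h6 := (F.key hu).1
          have h7 := OForest.le_S hz1 u
          have h8 := (F.key hv).2 u huv
          omega

end
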